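/- Define on S = M₂(ℂ)² the maps J(x⊕u) = (−u*) ⊕ x* and D(x⊕u) = (E₁₂ u − u E₁₂) ⊕ (E₂₁ x − x E₂₁). Then J is antilinear with J² = −id, J D = D J, the left action a·(x⊕u) = (ax)⊕(au) satisfies [a, J b* J⁻¹] = 0 for all a,b ∈ M₂(ℂ), and with γ(x⊕u) = (−x)⊕u we have γ² = id, Jγ = −γJ, Dγ = −γD. -/

import Mathlib

abbrev M2 : Type := Matrix (Fin 2) (Fin 2) ℂ

noncomputable def E12 : M2 := Matrix.single 0 1 1
noncomputable def E21 : M2 := Matrix.single 1 0 1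

/-- The real structure J(x⊕u) = (−u*) ⊕ x*. -/
noncomputable def JM (p : M2 × M2) : M2 × M2 := (-(star p.2), star p.1)

/-- The Dirac operator D(x⊕u) = (E₁₂u − uE₁₂) ⊕ (E₂₁x − xE₂₁). -/
noncomputable def DM (p : M2 × M2) : M2 × M2 :=
  (E12 * p.2 - p.2 * E12, E21 * p.1 - p.1 * E21)

/-- The grading γ(x⊕u) = (−x) ⊕ u. -/
noncomputable def γM (p : M2 × M2) : M2 × M2 := (-p.1, p.2)

/-- J is antilinear with J² = −id, JD = DJ, the left action commutes with
J b* J⁻¹ (which acts by right multiplication by b*), and with γ(x⊕u) = (−x)⊕u we have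
γ² = id, Jγ = −γJ and Dγ = −γD. -/
theorem stmt9 :
    (∀ (c : ℂ) (p q : M2 × M2), JM (c • p + q) = (starRingEnd ℂ c) • JM p + JM q) ∧
    (∀ p : M2 × M2, JM (JM p) = -p) ∧
    (∀ p : M2 × M2, JM (DM p) = DM (JM p)) ∧
    (∀ (a b : M2) (p : M2 × M2),
        (a * (p.1 * star b), a * (p.2 * star b))
          = ((a * p.1) * star b, (a * p.2) * star b)) ∧
    (∀ p : M2 × M2, γM (γM p) = p) ∧
    (∀ p : M2 × M2, JM (γM p) = -γM (JM p)) ∧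
    (∀ p : M2 × M2, DM (γM p) = -γM (DM p)) := by
  have hE : star E21 = E12 := by
    simp [E12, E21, Matrix.star_eq_conjTranspose]
  refine ⟨?_, ?_, ?_, ?_, ?_, ?_, ?_⟩
  · intro c p q
    simp [JM, Prod.ext_iff, smul_add, star_add, star_smul,
      Prod.smul_fst, Prod.smul_snd, neg_add, smul_neg, add_comm]
  · intro p; simp [JM, Prod.ext_iff]
  · intro p
    have hE' : star E12 = E21 := by rw [← hE, star_star]
    simp [JM, DM, Prod.ext_iff, star_sub, StarMul.star_mul, hE, hE',
      mul_neg, neg_mul, sub_eq_add_neg, add_comm]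
  · intro a b p; simp [mul_assoc]
  · intro p; simp [γM]
  · intro p; simp [JM, γM, Prod.ext_iff]
  · intro p; simp [DM, γM, Prod.ext_iff, mul_neg, neg_mul, neg_sub, sub_eq_add_neg, add_comm]
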